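/- Let F be the free group on generators x_1, …, x_n, let J be a finite index set, and for each j ∈ J let r_j = w_j x_{s(j)} w_j^{-1} x_{t(j)}^{-1} with w_j ∈ F and s, t : J → {1,…,n}. Let G be the quotient of F by the normal closure of {r_j : j ∈ J} (a group with Wirtinger presentation). If the graph on vertex set {1,…,n} with an edge {s(j), t(j)} for each j ∈ J is connected, then the abelianization of G is infinite cyclic (isomorphic to ℤ). -/

import Mathlib

/-- If a group has a Wirtinger presentation (every relator of the form
`w x_s w⁻¹ x_t⁻¹`) whose associated graph on the generators is connected,
then its abelianization is infinite cyclic. -/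
theorem wirtinger_abelianization (n : ℕ) (hn : 1 ≤ n) (J : Type) [Fintype J]
    (w : J → FreeGroup (Fin n)) (s t : J → Fin n)
    (hconn : ∀ a b : Fin n, Relation.ReflTransGen
      (fun a b : Fin n => ∃ j : J, (s j = a ∧ t j = b) ∨ (s j = b ∧ t j = a)) a b) :
    Nonempty
      (Abelianization (PresentedGroup
          (Set.range fun j : J =>
            w j * FreeGroup.of (s j) * (w j)⁻¹ * (FreeGroup.of (t j))⁻¹)) ≃*
        Multiplicative ℤ) := by
  set rels : Set (FreeGroup (Fin n)) := Set.range fun j : J =>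
      w j * FreeGroup.of (s j) * (w j)⁻¹ * (FreeGroup.of (t j))⁻¹ with hrels
  have hkill : ∀ r ∈ rels,
      FreeGroup.lift (fun _ : Fin n => Multiplicative.ofAdd (1 : ℤ)) r = 1 := by
    rintro r ⟨j, rfl⟩
    simp only [map_mul, map_inv, FreeGroup.lift_apply_of]
    exact commutatorElement_eq_one_iff_mul_comm.2 (mul_comm _ _)
  let φ : PresentedGroup rels →* Multiplicative ℤ := PresentedGroup.toGroup hkill
  let ψ : Abelianization (PresentedGroup rels) →* Multiplicative ℤ := Abelianization.lift φ
  let i0 : Fin n := ⟨0, hn⟩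
  let g0 : Abelianization (PresentedGroup rels) :=
    Abelianization.of (PresentedGroup.of i0)
  let χ : Multiplicative ℤ →* Abelianization (PresentedGroup rels) :=
    zpowersHom _ g0
  -- the map from the free group to the abelianization
  let q : FreeGroup (Fin n) →* Abelianization (PresentedGroup rels) :=
    (Abelianization.of).comp (QuotientGroup.mk' (Subgroup.normalClosure rels))
  have hq : ∀ a : Fin n,
      q (FreeGroup.of a) = Abelianization.of (PresentedGroup.of a) := fun a => rfl
  have hstep : ∀ a b : Fin n,
      (∃ j : J, (s j = a ∧ t j = b) ∨ (s j = b ∧ t j = a)) →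
      q (FreeGroup.of a) = q (FreeGroup.of b) := by
    have main : ∀ j : J, q (FreeGroup.of (s j)) = q (FreeGroup.of (t j)) := by
      intro j
      have h1 : q (w j * FreeGroup.of (s j) * (w j)⁻¹ * (FreeGroup.of (t j))⁻¹) = 1 := by
        have hm : (QuotientGroup.mk' (Subgroup.normalClosure rels))
            (w j * FreeGroup.of (s j) * (w j)⁻¹ * (FreeGroup.of (t j))⁻¹) = 1 :=
          (QuotientGroup.eq_one_iff _).2
            (Subgroup.subset_normalClosure ⟨j, rfl⟩)
        calc q (w j * FreeGroup.of (s j) * (w j)⁻¹ * (FreeGroup.of (t j))⁻¹)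
            = (Abelianization.of ((QuotientGroup.mk' (Subgroup.normalClosure rels))
                (w j * FreeGroup.of (s j) * (w j)⁻¹ * (FreeGroup.of (t j))⁻¹)) : Abelianization (PresentedGroup rels)) := rfl
          _ = 1 := by rw [hm]; exact map_one _
      rw [map_mul, map_mul, map_mul, map_inv, map_inv] at h1
      have h2 := mul_eq_one_iff_eq_inv.mp h1
      rwa [mul_comm (q (w j)), mul_inv_cancel_right, inv_inv] at h2
    rintro a b ⟨j, hj | hj⟩
    · rw [← hj.1, ← hj.2]; exact main j
    · rw [← hj.1, ← hj.2]; exact (main j).symm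
  have keyRT : ∀ a b : Fin n, Relation.ReflTransGen
      (fun a b : Fin n => ∃ j : J, (s j = a ∧ t j = b) ∨ (s j = b ∧ t j = a)) a b →
      q (FreeGroup.of a) = q (FreeGroup.of b) := by
    intro a b h
    induction h with
    | refl => rfl
    | tail _ hbc ih => exact ih.trans (hstep _ _ hbc)
  have key : ∀ i : Fin n,
      Abelianization.of (PresentedGroup.of (rels := rels) i) = g0 := by
    intro i
    have := keyRT i i0 (hconn i i0)
    rwa [hq, hq] at this
  have hψg0 : ψ g0 = Multiplicative.ofAdd (1 : ℤ) := by
    show ψ (Abelianization.of (PresentedGroup.of i0)) = _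
    simp [ψ, φ]
  have h1 : ψ.comp χ = MonoidHom.id (Multiplicative ℤ) := by
    ext1
    simp only [MonoidHom.comp_apply, MonoidHom.id_apply]
    show ψ (g0 ^ ((Multiplicative.ofAdd (1 : ℤ)).toAdd)) = _
    rw [toAdd_ofAdd, zpow_one, hψg0]
  have h2 : χ.comp ψ = MonoidHom.id _ := by
    apply Abelianization.hom_ext
    apply PresentedGroup.ext
    intro x
    simp only [MonoidHom.comp_apply]
    show χ (ψ (Abelianization.of (PresentedGroup.of x))) = Abelianization.of (PresentedGroup.of x)
    have : ψ (Abelianization.of (PresentedGroup.of x)) = Multiplicative.ofAdd (1 : ℤ) := by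
      simp [ψ, φ]
    rw [this, key x]
    show g0 ^ ((Multiplicative.ofAdd (1 : ℤ)).toAdd) = g0
    rw [toAdd_ofAdd, zpow_one]
  exact ⟨MonoidHom.toMulEquiv ψ χ h2 h1⟩
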